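/- Consider the algorithm A_{L,c} on n machines with true execution times t ∈ ℝ_{≥0}^n. At any pure Nash equilibrium t̂, the second smallest declaration exceeds the minimum declaration by at least a factor of c: t̂_sec ≥ c·t̂_min. -/

import Mathlib

open Finset

/-- The minimum declaration among the `n` machines. -/
noncomputable def xmin {n : ℕ} (x : Fin n → ℝ) : ℝ := ⨅ i, x i

open scoped Classical in
/-- The set of machines making the minimum declaration. -/
noncomputable def Nmin {n : ℕ} (x : Fin n → ℝ) : Finset (Fin n) :=
  Finset.univ.filter fun i => x i = xmin x

/-- The second smallest declaration: the minimum declaration among machines outside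
`Nmin x` (equal to `xmin x` if all machines make the minimum declaration). -/
noncomputable def xsec {n : ℕ} (x : Fin n → ℝ) : ℝ :=
  if h : (Finset.univ \ Nmin x).Nonempty then (Finset.univ \ Nmin x).inf' h x
  else xmin x

open scoped Classical in
/-- The set of machines declaring the second smallest declaration. -/
noncomputable def Nsec {n : ℕ} (x : Fin n → ℝ) : Finset (Fin n) :=
  Finset.univ.filter fun i => x i = xsec x

/-- The probability with which the algorithm `A_{L,c}` assigns the single task to
machine `i`, given the declared execution times `x`. -/
noncomputable def alloc {n : ℕ} (L c : ℝ) (x : Fin n → ℝ) (i : Fin n) : ℝ :=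
  if xmin x = xsec x then 1 / n
  else if xsec x < c * xmin x then
    (if i ∈ Nmin x then (1 / L) / (Nmin x).card
     else if i ∈ Nsec x then (1 - 1 / L) / (Nsec x).card
     else 0)
  else
    (if i ∈ Nmin x then
      (1 - ∑ k ∈ Finset.univ \ Nmin x, xmin x / (L * x k)) / (Nmin x).card
     else xmin x / (L * x i))

/-- The expected cost of machine `i` (with true times `t`) at declarations `x`,
when machines are bound by their declarations. -/
noncomputable def cost {n : ℕ} (L c : ℝ) (t x : Fin n → ℝ) (i : Fin n) : ℝ :=
  alloc L c x i * max (x i) (t i)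

/-- `b` is a pure Nash equilibrium of `A_{L,c}` for true times `t`: no machine can
strictly decrease her expected cost by unilaterally changing her declaration to any
other nonnegative value. -/
def IsEquilibrium {n : ℕ} (L c : ℝ) (t b : Fin n → ℝ) : Prop :=
  ∀ i : Fin n, ∀ x : ℝ, 0 ≤ x →
    cost L c t b i ≤ cost L c t (Function.update b i x) i

/-- At any pure Nash equilibrium `b` of `A_{L,c}` on `n ≥ 2` machines, the second
smallest declaration exceeds the minimum declaration by at least a factor of `c`:
`xsec b ≥ c * xmin b`. -/
lemma xmin_le_app {n : ℕ} (x : Fin n → ℝ) (i : Fin n) : xmin x ≤ x i :=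
  ciInf_le (Set.finite_range x).bddBelow i

lemma mem_Nmin' {n : ℕ} {x : Fin n → ℝ} {i : Fin n} : i ∈ Nmin x ↔ x i = xmin x := by
  simp [Nmin]

lemma mem_Nsec' {n : ℕ} {x : Fin n → ℝ} {i : Fin n} : i ∈ Nsec x ↔ x i = xsec x := by
  simp [Nsec]

lemma xmin_update {n : ℕ} [Nonempty (Fin n)] (b : Fin n → ℝ) (j : Fin n) (x : ℝ)
    (hx : xmin b < x) (i0 : Fin n) (hi0 : i0 ≠ j) (hmin : b i0 = xmin b) :
    xmin (Function.update b j x) = xmin b := by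
  apply le_antisymm
  · calc xmin (Function.update b j x) ≤ Function.update b j x i0 := xmin_le_app _ _
      _ = xmin b := by rw [Function.update_of_ne hi0]; exact hmin
  · apply le_ciInf
    intro k
    by_cases hk : k = j
    · subst hk; rw [Function.update_self]; exact hx.le
    · rw [Function.update_of_ne hk]; exact xmin_le_app b k

set_option maxHeartbeats 2000000 in
theorem claim_sec_bid
    {n : ℕ} (hn : 2 ≤ n) (L c : ℝ)
    (hL : 2 * ((n : ℝ) - 1) < L) (hc : 1 < c)
    (t b : Fin n → ℝ)
    (ht : ∀ i, 0 ≤ t i) (hb : ∀ i, 0 ≤ b i)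
    (heq : IsEquilibrium L c t b) :
    c * xmin b ≤ xsec b := by
  by_contra hcon
  push_neg at hcon
  have hne : Nonempty (Fin n) := ⟨⟨0, by omega⟩⟩
  have hn2 : (2:ℝ) ≤ (n:ℝ) := by exact_mod_cast hn
  have hnL : (n:ℝ) < L := by linarith
  have hL0 : (0:ℝ) < L := by linarith
  have hMle : ∀ i, xmin b ≤ b i := xmin_le_app b
  obtain ⟨i0, hi0⟩ : ∃ i, b i = xmin b := by
    obtain ⟨i, hi⟩ := Finite.exists_min b
    exact ⟨i, le_antisymm (le_ciInf hi) (hMle i)⟩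
  have hM0 : 0 ≤ xmin b := hi0 ▸ hb i0
  have hMS : xmin b ≤ xsec b := by
    rw [xsec]
    split
    · next h => obtain ⟨k, hk, hke⟩ := Finset.exists_mem_eq_inf' h b
                rw [hke]; exact hMle k
    · exact le_refl _
  have hMpos : 0 < xmin b := by
    rcases hM0.lt_or_eq with h | h
    · exact h
    · exfalso; rw [← h] at hcon; simp at hcon; linarith
  have hcM : xmin b < c * xmin b := by nlinarith
  by_cases hS : (Finset.univ \ Nmin b).Nonempty
  · -- second-smallest exists strictly above the minimum
    have hxsec_eq : xsec b = (Finset.univ \ Nmin b).inf' hS b := by rw [xsec, dif_pos hS]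
    obtain ⟨j, hjS, hje⟩ := Finset.exists_mem_eq_inf' hS b
    have hbj : b j = xsec b := by rw [hxsec_eq, hje]
    have hjNmin : j ∉ Nmin b := (Finset.mem_sdiff.mp hjS).2
    have hbjM : xmin b < b j := lt_of_le_of_ne (hMle j) (fun h => hjNmin (mem_Nmin'.mpr h.symm))
    have hMS2 : xmin b < xsec b := hbj ▸ hbjM
    have hjNsec : j ∈ Nsec b := mem_Nsec'.mpr hbj
    set m : ℕ := (Nsec b).card with hm
    have hm1 : 1 ≤ m := Finset.card_pos.mpr ⟨j, hjNsec⟩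
    have hmn : m + 1 ≤ n := by
      have hsub : Nsec b ⊆ Finset.univ \ Nmin b := by
        intro k hk
        rw [Finset.mem_sdiff]
        refine ⟨Finset.mem_univ k, fun hkm => ?_⟩
        have h1 := mem_Nsec'.mp hk
        have h2 := mem_Nmin'.mp hkm
        rw [h2] at h1; exact absurd h1 (ne_of_lt hMS2)
      have h1 : m ≤ (Finset.univ \ Nmin b).card := Finset.card_le_card hsub
      have h2 : (Finset.univ \ Nmin b).card = n - (Nmin b).card := by
        rw [Finset.card_sdiff_of_subset (Finset.subset_univ _), Finset.card_univ, Fintype.card_fin]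
      have h3 : 1 ≤ (Nmin b).card := Finset.card_pos.mpr ⟨i0, mem_Nmin'.mpr hi0⟩
      have h4 : (Nmin b).card ≤ n := by
        simpa using Finset.card_le_card (Finset.subset_univ (Nmin b))
      omega
    have hmR : (m:ℝ) + 1 ≤ (n:ℝ) := by exact_mod_cast hmn
    have hm1R : (1:ℝ) ≤ (m:ℝ) := by exact_mod_cast hm1
    have hcostb : cost L c t b j = (1 - 1/L) / m * max (xsec b) (t j) := by
      rw [cost, alloc, if_neg (ne_of_lt hMS2), if_pos hcon, if_neg hjNmin, if_pos hjNsec, hbj]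
    -- the deviation
    set x : ℝ := max (t j) (c * xmin b) + 1 with hxdef
    have hxt : t j < x := lt_of_le_of_lt (le_max_left _ _) (lt_add_one _)
    have hxc : c * xmin b < x := lt_of_le_of_lt (le_max_right _ _) (lt_add_one _)
    have hxM : xmin b < x := lt_trans hcM hxc
    have hx0 : 0 ≤ x := le_of_lt (lt_trans hMpos hxM)
    set b' : Fin n → ℝ := Function.update b j x with hb'
    have hb'j : b' j = x := Function.update_self _ _ _
    have hxmin' : xmin b' = xmin b :=
      xmin_update b j x hxM i0 (fun h => hjNmin (h ▸ mem_Nmin'.mpr hi0)) hi0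
    have hNmin' : Nmin b' = Nmin b := by
      ext k
      rw [mem_Nmin', mem_Nmin', hxmin']
      by_cases hk : k = j
      · subst hk
        rw [hb'j]
        constructor
        · intro h; exact absurd h (ne_of_gt hxM)
        · intro h; exact absurd h (ne_of_gt hbjM)
      · rw [hb', Function.update_of_ne hk]
    have hS' : (Finset.univ \ Nmin b') = Finset.univ \ Nmin b := by rw [hNmin']
    have hxsec' : xsec b' = (Finset.univ \ Nmin b).inf' hS b' := by
      rw [xsec, hS', dif_pos hS]
    have hsecM' : xmin b < xsec b' := by
      rw [hxsec', Finset.lt_inf'_iff]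
      intro k hk
      by_cases hkj : k = j
      · subst hkj; rw [hb'j]; exact hxM
      · rw [hb', Function.update_of_ne hkj]
        exact lt_of_le_of_ne (hMle k) (fun h => (Finset.mem_sdiff.mp hk).2 (mem_Nmin'.mpr h.symm))
    have hjNmin' : j ∉ Nmin b' := by rw [hNmin']; exact hjNmin
    have hcost' : cost L c t b' j ≤ xmin b / L := by
      by_cases hcase : xsec b' < c * xmin b'
      · have hjNsec' : j ∉ Nsec b' := by
          rw [mem_Nsec', hb'j]
          intro h
          rw [hxmin', ← h] at hcase
          linarith
        rw [cost, alloc, if_neg (by rw [hxmin']; exact ne_of_lt hsecM'),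
          if_pos hcase, if_neg hjNmin', if_neg hjNsec']
        rw [zero_mul]
        positivity
      · rw [cost, alloc, if_neg (by rw [hxmin']; exact ne_of_lt hsecM'),
          if_neg hcase, if_neg hjNmin', hxmin', hb'j]
        rw [max_eq_left hxt.le]
        have hxne : x ≠ 0 := by positivity
        rw [div_mul_eq_mul_div, mul_comm L x, ← div_div, mul_div_assoc, div_self hxne, mul_one]
    have hkey : xmin b / L < (1 - 1/L) / m * xsec b := by
      have hm0 : (0:ℝ) < m := by linarith
      have hsec0 : (0:ℝ) < xsec b := lt_trans hMpos hMS2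
      have h1 : (m:ℝ) * xmin b < (L - 1) * xsec b := by
        nlinarith [mul_pos (show (0:ℝ) < L - 1 - m by linarith) hsec0,
          mul_lt_mul_of_pos_left hMS2 hm0]
      rw [div_lt_iff₀ hL0]
      have heq2 : (1 - 1/L) / (m:ℝ) * xsec b * L = (L - 1) * xsec b / m := by
        field_simp
      rw [heq2, lt_div_iff₀ hm0]
      nlinarith
    have hub : (1 - 1/L) / m * xsec b ≤ cost L c t b j := by
      rw [hcostb]
      apply mul_le_mul_of_nonneg_left (le_max_left _ _)
      have : (0:ℝ) < 1 - 1/L := by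
        rw [sub_pos, div_lt_one hL0]; linarith
      exact div_nonneg this.le (Nat.cast_nonneg _)
    have := heq j x hx0
    rw [← hb'] at this
    linarith
  · -- all machines declare the minimum
    have hall : ∀ k, b k = xmin b := by
      intro k
      by_contra hk
      exact hS ⟨k, Finset.mem_sdiff.mpr ⟨Finset.mem_univ k, fun h => hk (mem_Nmin'.mp h)⟩⟩
    have hxsec_eq : xsec b = xmin b := by rw [xsec, dif_neg hS]
    obtain ⟨k, hk⟩ : ∃ k : Fin n, k ≠ i0 := by
      have : Nontrivial (Fin n) := Fin.nontrivial_iff_two_le.mpr hn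
      exact exists_ne i0
    set x : ℝ := max (t i0) (c * xmin b) + 1 with hxdef
    have hxt : t i0 < x := lt_of_le_of_lt (le_max_left _ _) (lt_add_one _)
    have hxc : c * xmin b < x := lt_of_le_of_lt (le_max_right _ _) (lt_add_one _)
    have hxM : xmin b < x := lt_trans hcM hxc
    have hx0 : 0 ≤ x := le_of_lt (lt_trans hMpos hxM)
    set b' : Fin n → ℝ := Function.update b i0 x with hb'
    have hb'i : b' i0 = x := Function.update_self _ _ _
    have hxmin' : xmin b' = xmin b := xmin_update b i0 x hxM k hk (hall k)
    have hNmin' : Nmin b' = Finset.univ \ {i0} := by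
      ext l
      rw [mem_Nmin', hxmin', Finset.mem_sdiff, Finset.mem_singleton]
      by_cases hl : l = i0
      · subst hl
        rw [hb'i]
        simp only [Finset.mem_univ, true_and]
        constructor
        · intro h; exact absurd h (ne_of_gt hxM)
        · intro h; simp at h
      · rw [hb', Function.update_of_ne hl]
        simp [hall l, hl]
    have hS' : (Finset.univ \ Nmin b') = {i0} := by
      rw [hNmin', Finset.sdiff_sdiff_self_left, Finset.univ_inter]
    have hxsec' : xsec b' = x := by
      rw [xsec, hS', dif_pos (Finset.singleton_nonempty i0)]
      rw [Finset.inf'_singleton, hb'i]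
    have hiNmin' : i0 ∉ Nmin b' := by
      rw [hNmin', Finset.mem_sdiff]
      simp
    have hcost' : cost L c t b' i0 = xmin b / L := by
      rw [cost, alloc, if_neg (by rw [hxmin', hxsec']; exact ne_of_lt hxM),
        if_neg (by rw [hxmin', hxsec']; exact not_lt.mpr hxc.le), if_neg hiNmin',
        hxmin', hb'i, max_eq_left hxt.le]
      have hxne : x ≠ 0 := by positivity
      rw [div_mul_eq_mul_div, mul_comm L x, ← div_div, mul_div_assoc, div_self hxne, mul_one]
    have hcostb : cost L c t b i0 = 1 / n * max (b i0) (t i0) := by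
      rw [cost, alloc, if_pos hxsec_eq.symm]
    have hlb : xmin b / n ≤ cost L c t b i0 := by
      rw [hcostb]
      calc xmin b / n = 1/n * xmin b := by ring
        _ ≤ 1/n * max (b i0) (t i0) := by
            apply mul_le_mul_of_nonneg_left _ (by positivity)
            rw [hi0]; exact le_max_left _ _
    have hLn : xmin b / L < xmin b / n := by
      apply div_lt_div_of_pos_left hMpos (by linarith) hnL
    have := heq i0 x hx0
    rw [← hb'] at this
    linarith
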